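/- Let D = D_{p,q,k} be a regular Dekking curve with scaling factor r (|r| > 1), gcd(p,q) = 1, and Q = p^φ(q). Then the sets S_n = r^{−n}·P(D[:Qⁿ]) form a Cauchy sequence in the Hausdorff metric on nonempty compact subsets of ℂ, and hence converge to a limit K; moreover K ≠ {0} since 1 ∈ S_n for all n. -/

import Mathlib

open Complex Finset Filter

private lemma aux_pow_mod (ζ : ℂ) {n : ℕ} (hn : ζ ^ n = 1) (a : ℕ) : ζ ^ (a % n) = ζ ^ a := by
  conv_rhs => rw [← Nat.mod_add_div a n, pow_add, pow_mul, hn, one_pow, mul_one]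

private lemma aux_zpow_congr (ζ : ℂ) {n : ℕ} (hn : ζ ^ n = 1) (hζ : ζ ≠ 0) {a b : ℤ}
    (h : (n : ℤ) ∣ a - b) : ζ ^ a = ζ ^ b := by
  obtain ⟨c, hc⟩ := h
  have ha : a = b + (n : ℤ) * c := by linarith
  rw [ha, zpow_add₀ hζ, zpow_mul, zpow_natCast, hn, one_zpow, mul_one]

private lemma aux_seg_dist (x y z : ℂ) (h : z ∈ segment ℝ x y) :
    dist z x ≤ dist x y := by
  obtain ⟨a, b, ha, hb, hab, rfl⟩ := h
  have hkey : a • x + b • y - x = b • (y - x) := by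
    have ha' : a = 1 - b := by linarith
    rw [ha', sub_smul, one_smul, smul_sub]
    ring_nf
  rw [dist_eq_norm, hkey, norm_smul, dist_eq_norm]
  have hb1 : ‖b‖ ≤ 1 := by rw [Real.norm_eq_abs, _root_.abs_of_nonneg hb]; linarith
  calc ‖b‖ * ‖y - x‖ ≤ 1 * ‖y - x‖ :=
        mul_le_mul_of_nonneg_right hb1 (norm_nonneg _)
    _ = ‖y - x‖ := one_mul _
    _ = ‖x - y‖ := norm_sub_rev _ _

private lemma aux_seg_compact (x y : ℂ) : IsCompact (segment ℝ x y) := by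
  rw [segment_eq_image]
  exact isCompact_Icc.image <| by
    exact ((continuous_const.sub continuous_id).smul continuous_const).add
      (continuous_id.smul continuous_const)

/-- let `D = D_{p,q,k}` be a regular Dekking curve (`gcd(p,q)=1`,
`gcd(k,q)=1`, scaling factor `r = D(Q)` with `|r| > 1`, `Q = p^φ(q)`). Then the scaled
polygonal curves `Sₙ = r^{-n}·P(D[:Qⁿ])` form a Cauchy sequence in the Hausdorff metric,
hence converge to some limit `K`, which is nonempty, compact, and ≠ `{0}`; indeed
`1 ∈ Sₙ` for every `n`. -/
theorem stmt13 (p q : ℕ) (hp : 2 ≤ p) (hq : 2 ≤ q) (hpq : Nat.gcd p q = 1)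
    (k : ℤ) (hk : Int.gcd k q = 1)
    (t : ℕ → ZMod p) (ht0 : t 0 = 0)
    (htrec : ∀ m r : ℕ, r < p → t (p * m + r) = t m + (r : ZMod p))
    (D : ℕ → ℂ)
    (hD : ∀ n, D n = ∑ i ∈ range n,
      Complex.exp (2 * Real.pi * I / p) ^ (t i).val *
        Complex.exp (2 * Real.pi * I / q) ^ (k * ((i % q : ℕ) : ℤ)))
    (r : ℂ) (hr : r = D (p ^ Nat.totient q))
    (hreg : 1 < ‖r‖)
    (S : ℕ → Set ℂ)
    (hS : ∀ n, S n = (fun z => r⁻¹ ^ n * z) ''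
      ⋃ i ∈ range ((p ^ Nat.totient q) ^ n), segment ℝ (D i) (D (i + 1))) :
    (∀ n, (1 : ℂ) ∈ S n) ∧
    (∀ ε > (0 : ℝ), ∃ N, ∀ m ≥ N, ∀ n ≥ N,
      Metric.hausdorffDist (S m) (S n) < ε) ∧
    ∃ K : Set ℂ, K.Nonempty ∧ IsCompact K ∧ K ≠ {0} ∧
      Tendsto (fun n => Metric.hausdorffDist (S n) K) atTop (nhds 0) := by
  haveI : NeZero p := ⟨by omega⟩
  set Q : ℕ := p ^ Nat.totient q with hQdef
  set ζp : ℂ := Complex.exp (2 * Real.pi * I / p) with hζpdef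
  set ζq : ℂ := Complex.exp (2 * Real.pi * I / q) with hζqdef
  set f : ℕ → ℂ := fun i => ζp ^ (t i).val * ζq ^ (k * ((i % q : ℕ) : ℤ)) with hfdef
  have hpC : (p : ℂ) ≠ 0 := Nat.cast_ne_zero.2 (by omega)
  have hqC : (q : ℂ) ≠ 0 := Nat.cast_ne_zero.2 (by omega)
  have hζp1 : ζp ^ p = 1 := by
    rw [hζpdef, ← Complex.exp_nat_mul,
      show (p : ℂ) * (2 * Real.pi * I / p) = 2 * Real.pi * I by field_simp]
    exact Complex.exp_two_pi_mul_I
  have hζq1 : ζq ^ q = 1 := by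
    rw [hζqdef, ← Complex.exp_nat_mul,
      show (q : ℂ) * (2 * Real.pi * I / q) = 2 * Real.pi * I by field_simp]
    exact Complex.exp_two_pi_mul_I
  have hζqne : ζq ≠ 0 := Complex.exp_ne_zero _
  have habsp : ‖ζp‖ = 1 := by
    rw [hζpdef, show (2 * Real.pi * I / p : ℂ) = ((2 * Real.pi / p : ℝ) : ℂ) * I by
      push_cast; ring]
    exact Complex.norm_exp_ofReal_mul_I _
  have habsq : ‖ζq‖ = 1 := by
    rw [hζqdef, show (2 * Real.pi * I / q : ℂ) = ((2 * Real.pi / q : ℝ) : ℂ) * I by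
      push_cast; ring]
    exact Complex.norm_exp_ofReal_mul_I _
  have habsf : ∀ i, ‖f i‖ = 1 := by
    intro i
    rw [hfdef]
    simp [norm_mul, norm_pow, norm_zpow, habsp, habsq]
  have hD' : ∀ n, D n = ∑ i ∈ range n, f i := hD
  -- digit-sum lemma
  have hdigit : ∀ e a s : ℕ, s < p ^ e → t (p ^ e * a + s) = t a + t s := by
    intro e
    induction e with
    | zero =>
      intro a s hs
      rw [pow_zero] at hs
      have hs0 : s = 0 := by omega
      subst hs0
      simp [ht0]
    | succ e ih =>
      intro a s hs
      have hp0 : 0 < p := by omega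
      have hsp : s % p < p := Nat.mod_lt _ hp0
      have hdiv : s / p < p ^ e := by
        rw [Nat.div_lt_iff_lt_mul hp0]
        calc s < p ^ (e + 1) := hs
          _ = p ^ e * p := by rw [pow_succ]
      have hsplit : p ^ (e + 1) * a + s = p * (p ^ e * a + s / p) + s % p := by
        have h2 : p * (s / p) + s % p = s := Nat.div_add_mod s p
        calc p ^ (e + 1) * a + s
            = p ^ (e + 1) * a + (p * (s / p) + s % p) := by rw [h2]
          _ = p * (p ^ e * a + s / p) + s % p := by ring
      have hsval : t s = t (s / p) + (s % p : ZMod p) := by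
        conv_lhs => rw [show s = p * (s / p) + s % p from (Nat.div_add_mod s p).symm]
        exact htrec _ _ hsp
      rw [hsplit, htrec _ _ hsp, ih a (s / p) hdiv, hsval, add_assoc]
  -- Q ≡ 1 mod q
  have hQq : Q % q = 1 := by
    have hco : Nat.Coprime p q := hpq
    have := Nat.ModEq.pow_totient hco
    have h1 : Q % q = 1 % q := this
    rwa [Nat.one_mod_eq_one.mpr (by omega)] at h1
  -- multiplicativity of f
  have hfmul : ∀ a s : ℕ, s < Q → f (Q * a + s) = f a * f s := by
    intro a s hs
    have ht' : t (Q * a + s) = t a + t s := hdigit _ a s hs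
    have hppart : ζp ^ (t (Q * a + s)).val = ζp ^ (t a).val * ζp ^ (t s).val := by
      rw [ht', ZMod.val_add, aux_pow_mod ζp hζp1, pow_add]
    have hQZ : (Q : ℤ) % q = 1 := by
      have h : ((Q % q : ℕ) : ℤ) = 1 := by rw [hQq]; rfl
      push_cast at h
      exact h
    have hdvd : (q : ℤ) ∣ (k * (((Q * a + s) % q : ℕ) : ℤ)) -
        (k * ((a % q : ℕ) : ℤ) + k * ((s % q : ℕ) : ℤ)) := by
      have key : (q : ℤ) ∣ (((Q * a + s) % q : ℕ) : ℤ) -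
          (((a % q : ℕ) : ℤ) + ((s % q : ℕ) : ℤ)) := by
        push_cast
        have h1 : ((Q : ℤ) * a + s) % q ≡ (Q : ℤ) * a + s [ZMOD q] :=
          Int.emod_emod_of_dvd _ dvd_rfl
        have h2 : (Q : ℤ) * a + s ≡ 1 * a + s [ZMOD q] := by
          refine Int.ModEq.add_right _ (Int.ModEq.mul_right _ ?_)
          show (Q : ℤ) % q = 1 % q
          rw [hQZ, Int.emod_eq_of_lt (by norm_num)
            (by exact_mod_cast (show (1:ℕ) < q by omega))]
        have h3 : (a : ℤ) % q + (s : ℤ) % q ≡ (a : ℤ) + (s : ℤ) [ZMOD q] :=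
          Int.ModEq.add (Int.emod_emod_of_dvd _ dvd_rfl) (Int.emod_emod_of_dvd _ dvd_rfl)
        have : ((Q : ℤ) * a + s) % q ≡ (a : ℤ) % q + (s : ℤ) % q [ZMOD q] := by
          calc ((Q : ℤ) * a + s) % q ≡ (Q : ℤ) * a + s [ZMOD q] := h1
            _ ≡ 1 * a + s [ZMOD q] := h2
            _ = (a : ℤ) + s := by ring
            _ ≡ (a : ℤ) % q + (s : ℤ) % q [ZMOD q] := h3.symm
        exact Int.ModEq.dvd this.symm
      have : (k * (((Q * a + s) % q : ℕ) : ℤ)) -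
          (k * ((a % q : ℕ) : ℤ) + k * ((s % q : ℕ) : ℤ)) =
          k * ((((Q * a + s) % q : ℕ) : ℤ) - ((((a % q : ℕ) : ℤ)) + ((s % q : ℕ) : ℤ))) := by
        ring
      rw [this]
      exact key.mul_left k
    have hqpart : ζq ^ (k * (((Q * a + s) % q : ℕ) : ℤ)) =
        ζq ^ (k * ((a % q : ℕ) : ℤ)) * ζq ^ (k * ((s % q : ℕ) : ℤ)) := by
      rw [aux_zpow_congr ζq hζq1 hζqne hdvd, zpow_add₀ hζqne]
    show ζp ^ (t (Q * a + s)).val * ζq ^ (k * (((Q * a + s) % q : ℕ) : ℤ)) = _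
    rw [hppart, hqpart]
    ring
  have hrne : r ≠ 0 := by
    intro h
    rw [h] at hreg
    simp at hreg
    linarith
  -- self-similarity
  have hDQ : ∀ m, D (Q * m) = r * D m := by
    intro m
    induction m with
    | zero => simp [hD' 0]
    | succ m ih =>
      have hQm : Q * (m + 1) = Q * m + Q := by ring
      rw [hQm, hD', Finset.sum_range_add, ← hD' (Q * m), ih]
      have hin : ∑ i ∈ range Q, f (Q * m + i) = f m * D Q := by
        rw [hD' Q, Finset.mul_sum]
        exact Finset.sum_congr rfl fun s hs => hfmul m s (Finset.mem_range.1 hs)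
      rw [hin, ← hr]
      have hDsucc : D (m + 1) = D m + f m := by
        rw [hD', hD', Finset.sum_range_succ]
      rw [hDsucc]
      ring
  have hQ1 : 1 ≤ Q := Nat.one_le_pow _ _ (by omega)
  have hQpos : 0 < Q := hQ1
  have hD1 : D 1 = 1 := by
    rw [hD', Finset.sum_range_one, hfdef]
    simp [ht0]
  have hDpow : ∀ n, D (Q ^ n) = r ^ n := by
    intro n
    induction n with
    | zero => simpa using hD1
    | succ n ih =>
      rw [pow_succ, mul_comm (Q ^ n) Q, hDQ, ih, pow_succ]
      ring
  -- step bounds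
  have hDstep : ∀ i, ‖D (i + 1) - D i‖ = 1 := by
    intro i
    have : D (i + 1) - D i = f i := by
      rw [hD', hD', Finset.sum_range_succ]; ring
    rw [this]; exact habsf i
  have hband : ∀ n m : ℕ, ‖D (n + m) - D n‖ ≤ m := by
    intro n m
    have : D (n + m) - D n = ∑ i ∈ range m, f (n + i) := by
      rw [hD', hD', Finset.sum_range_add]; ring
    rw [this]
    calc ‖∑ i ∈ range m, f (n + i)‖ ≤ ∑ i ∈ range m, ‖f (n + i)‖ :=
          norm_sum_le _ _
      _ = ∑ _i ∈ range m, (1 : ℝ) := Finset.sum_congr rfl fun i _ => habsf _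
      _ = m := by simp
  -- the sets
  set T : ℕ → Set ℂ := fun n => ⋃ i ∈ range (Q ^ n), segment ℝ (D i) (D (i + 1)) with hTdef
  have hS' : ∀ n, S n = (fun z => r⁻¹ ^ n * z) '' T n := hS
  have hQn1 : ∀ n, 1 ≤ Q ^ n := fun n => Nat.one_le_pow _ _ hQpos
  have hTne : ∀ n, (T n).Nonempty := by
    intro n
    refine ⟨D 0, Set.mem_biUnion ?_ (left_mem_segment ℝ _ _)⟩
    exact Finset.mem_range.2 (hQn1 n)
  have hTcomp : ∀ n, IsCompact (T n) := by
    intro n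
    exact (range (Q ^ n)).isCompact_biUnion fun i _ => aux_seg_compact _ _
  have hSne : ∀ n, (S n).Nonempty := by
    intro n; rw [hS']; exact (hTne n).image _
  have hScomp : ∀ n, IsCompact (S n) := by
    intro n; rw [hS']
    exact (hTcomp n).image (continuous_mul_left _)
  -- 1 ∈ S n
  have h1mem : ∀ n, (1 : ℂ) ∈ S n := by
    intro n
    rw [hS']
    refine ⟨D (Q ^ n), ?_, ?_⟩
    · refine Set.mem_biUnion (Finset.mem_range.2 (show Q ^ n - 1 < Q ^ n by
        have := hQn1 n; omega)) ?_
      have h : Q ^ n - 1 + 1 = Q ^ n := by have := hQn1 n; omega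
      rw [h]
      exact right_mem_segment ℝ _ _
    · rw [hDpow n]
      show r⁻¹ ^ n * r ^ n = 1
      rw [← mul_pow, inv_mul_cancel₀ hrne, one_pow]
  -- geometric bound on consecutive Hausdorff distances
  set c : ℝ := (‖r‖)⁻¹ with hcdef
  have hc0 : 0 ≤ c := inv_nonneg.2 (norm_nonneg r)
  have hc1 : c < 1 := by
    rw [hcdef, inv_lt_one_iff₀]
    right; exact hreg
  have habsinv : ∀ n : ℕ, ‖r⁻¹ ^ n‖ = c ^ n := by
    intro n
    rw [norm_pow, norm_inv, hcdef]
  have hedist : ∀ m n, EMetric.hausdorffEdist (S m) (S n) ≠ ⊤ := fun m n =>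
    Metric.hausdorffEdist_ne_top_of_nonempty_of_bounded (hSne m) (hSne n)
      (hScomp m).isBounded (hScomp n).isBounded
  have hstep : ∀ n, Metric.hausdorffDist (S n) (S (n + 1)) ≤ (Q + 1) * c ^ n := by
    intro n
    have hb0 : (0 : ℝ) ≤ (Q + 1) * c ^ n := by positivity
    apply Metric.hausdorffDist_le_of_mem_dist hb0
    · -- from S n to S (n+1)
      rintro x hx
      rw [hS'] at hx
      obtain ⟨z, hz, rfl⟩ := hx
      obtain ⟨i, hi, hzi⟩ := Set.mem_iUnion₂.1 hz
      have hiQ : i < Q ^ n := Finset.mem_range.1 hi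
      refine ⟨r⁻¹ ^ (n + 1) * D (Q * i), ?_, ?_⟩
      · rw [hS']
        refine ⟨D (Q * i), Set.mem_biUnion ?_ (left_mem_segment ℝ _ _), rfl⟩
        refine Finset.mem_range.2 ?_
        calc Q * i < Q * Q ^ n := by
              exact (Nat.mul_lt_mul_left hQpos).2 hiQ
          _ = Q ^ (n + 1) := by rw [pow_succ, mul_comm]
      · have hkey : r⁻¹ ^ (n + 1) * D (Q * i) = r⁻¹ ^ n * D i := by
          rw [hDQ i, pow_succ]
          field_simp
        rw [hkey, Complex.dist_eq]
        have : r⁻¹ ^ n * z - r⁻¹ ^ n * D i = r⁻¹ ^ n * (z - D i) := by ring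
        rw [this, norm_mul, habsinv]
        have hz1 : ‖z - D i‖ ≤ 1 := by
          have := aux_seg_dist (D i) (D (i + 1)) z hzi
          rw [Complex.dist_eq, Complex.dist_eq] at this
          calc ‖z - D i‖ ≤ ‖D i - D (i + 1)‖ := this
            _ = ‖D (i + 1) - D i‖ := by rw [norm_sub_rev]
            _ = 1 := hDstep i
        have hcn : (0:ℝ) ≤ c ^ n := by positivity
        calc c ^ n * ‖z - D i‖ ≤ c ^ n * 1 :=
              mul_le_mul_of_nonneg_left hz1 hcn
          _ = c ^ n := mul_one _
          _ ≤ (Q + 1) * c ^ n := by nlinarith [hQ1, hcn]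
    · -- from S (n+1) to S n
      rintro x hx
      rw [hS'] at hx
      obtain ⟨z, hz, rfl⟩ := hx
      obtain ⟨j, hj, hzj⟩ := Set.mem_iUnion₂.1 hz
      have hjQ : j < Q ^ (n + 1) := Finset.mem_range.1 hj
      set i : ℕ := j / Q with hidef
      have hiQ : i < Q ^ n := by
        rw [hidef, Nat.div_lt_iff_lt_mul hQpos]
        calc j < Q ^ (n + 1) := hjQ
          _ = Q ^ n * Q := pow_succ Q n
      have hjsplit : Q * i + j % Q = j := Nat.div_add_mod j Q
      refine ⟨r⁻¹ ^ n * D i, ?_, ?_⟩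
      · rw [hS']
        exact ⟨D i, Set.mem_biUnion (Finset.mem_range.2 hiQ) (left_mem_segment ℝ _ _), rfl⟩
      · have hkey : r⁻¹ ^ n * D i = r⁻¹ ^ (n + 1) * D (Q * i) := by
          rw [hDQ i, pow_succ]
          field_simp
        rw [hkey, Complex.dist_eq]
        have heq : r⁻¹ ^ (n + 1) * z - r⁻¹ ^ (n + 1) * D (Q * i)
            = r⁻¹ ^ (n + 1) * (z - D (Q * i)) := by ring
        rw [heq, norm_mul, habsinv]
        -- |z - D(Q i)| ≤ 1 + (j % Q) ≤ Q
        have hzj1 : ‖z - D j‖ ≤ 1 := by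
          have := aux_seg_dist (D j) (D (j + 1)) z hzj
          rw [Complex.dist_eq, Complex.dist_eq] at this
          calc ‖z - D j‖ ≤ ‖D j - D (j + 1)‖ := this
            _ = ‖D (j + 1) - D j‖ := by rw [norm_sub_rev]
            _ = 1 := hDstep j
        have hjb : ‖D j - D (Q * i)‖ ≤ (j % Q : ℕ) := by
          have := hband (Q * i) (j % Q)
          rwa [hjsplit] at this
        have hmod : ((j % Q : ℕ) : ℝ) ≤ (Q : ℝ) - 1 := by
          have : j % Q < Q := Nat.mod_lt _ hQpos
          have : j % Q ≤ Q - 1 := by omega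
          calc ((j % Q : ℕ) : ℝ) ≤ ((Q - 1 : ℕ) : ℝ) := Nat.cast_le.2 this
            _ = (Q : ℝ) - 1 := by
              have : (1:ℕ) ≤ Q := hQ1
              push_cast [this]
              ring
        have htri : ‖z - D (Q * i)‖ ≤ (Q : ℝ) := by
          calc ‖z - D (Q * i)‖
              = ‖(z - D j) + (D j - D (Q * i))‖ := by ring_nf
            _ ≤ ‖z - D j‖ + ‖D j - D (Q * i)‖ :=
                norm_add_le _ _
            _ ≤ 1 + ((Q : ℝ) - 1) := by
                have := hjb.trans hmod
                linarith
            _ = (Q : ℝ) := by ring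
        have hcn : (0:ℝ) ≤ c ^ n := by positivity
        have hcsucc : c ^ (n + 1) ≤ c ^ n := by
          rw [pow_succ]
          nlinarith
        calc c ^ (n + 1) * ‖z - D (Q * i)‖ ≤ c ^ (n + 1) * (Q : ℝ) :=
              mul_le_mul_of_nonneg_left htri (by positivity)
          _ ≤ c ^ n * (Q : ℝ) := mul_le_mul_of_nonneg_right hcsucc (by positivity)
          _ ≤ (Q + 1) * c ^ n := by nlinarith
  -- package into nonempty compacts
  set A : ℕ → TopologicalSpace.NonemptyCompacts ℂ :=
    fun n => ⟨⟨S n, hScomp n⟩, hSne n⟩ with hAdef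
  have hAdist : ∀ m n, dist (A m) (A n) = Metric.hausdorffDist (S m) (S n) := fun m n => rfl
  have hcauchy : CauchySeq A := by
    apply cauchySeq_of_le_geometric c ((Q : ℝ) + 1) hc1
    intro n
    rw [hAdist]
    exact hstep n
  obtain ⟨L, hL⟩ := cauchySeq_tendsto_of_complete hcauchy
  refine ⟨h1mem, ?_, ?_⟩
  · intro ε hε
    obtain ⟨N, hN⟩ := Metric.cauchySeq_iff.1 hcauchy ε hε
    exact ⟨N, fun m hm n hn => by rw [← hAdist]; exact hN m hm n hn⟩
  · refine ⟨(L : Set ℂ), L.nonempty, L.isCompact, ?_, ?_⟩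
    · -- K ≠ {0} since 1 ∈ K
      have htend : Tendsto (fun n => dist (A n) L) atTop (nhds 0) :=
        tendsto_iff_dist_tendsto_zero.1 hL
      have hinf : ∀ n, Metric.infDist (1 : ℂ) (L : Set ℂ) ≤ dist (A n) L := by
        intro n
        have hfin : EMetric.hausdorffEdist (S n) (L : Set ℂ) ≠ ⊤ :=
          Metric.hausdorffEdist_ne_top_of_nonempty_of_bounded (hSne n) L.nonempty
            (hScomp n).isBounded L.isCompact.isBounded
        exact Metric.infDist_le_hausdorffDist_of_mem (h1mem n) hfin
      have h0 : Metric.infDist (1 : ℂ) (L : Set ℂ) ≤ 0 :=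
        ge_of_tendsto htend (Filter.Eventually.of_forall hinf)
      have h1L : (1 : ℂ) ∈ (L : Set ℂ) := by
        rw [L.isCompact.isClosed.mem_iff_infDist_zero L.nonempty]
        exact le_antisymm h0 Metric.infDist_nonneg
      intro heq
      rw [heq] at h1L
      simp at h1L
    · have htend : Tendsto (fun n => dist (A n) L) atTop (nhds 0) :=
        tendsto_iff_dist_tendsto_zero.1 hL
      have : (fun n => Metric.hausdorffDist (S n) (L : Set ℂ)) = fun n => dist (A n) L := by
        funext n
        rfl
      rw [this]
      exact htend
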